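/- For a probability distribution on {0,1}^𝒳 and a subset S ⊆ 𝒳 and disjoint partition S' = S₁' ∪ S₂' of a set disjoint from S, the influence satisfies I(S→S') ≤ I(S→S₁') + I(S→S₂'). -/

import Mathlib

open Finset

noncomputable def tvFin {α : Type*} [Fintype α] (f g : α → ℝ) : ℝ :=
  (∑ y, |f y - g y|) / 2

def mergeConf {N : ℕ} (S : Finset (Fin N)) (a ω : Fin N → Bool) : Fin N → Bool :=
  fun j => if j ∈ S then a j else ω j

noncomputable def condLawSet {N : ℕ} (P : (Fin N → Bool) → ℝ) (T : Finset (Fin N))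
    (c : Fin N → Bool) (S' : Finset (Fin N)) (y : {i // i ∈ S'} → Bool) : ℝ :=
  (∑ σ ∈ Finset.univ.filter
      (fun σ : Fin N → Bool => (∀ j ∈ T, σ j = c j) ∧ ∀ i : {i // i ∈ S'}, σ i.val = y i), P σ) /
  (∑ σ ∈ Finset.univ.filter (fun σ : Fin N → Bool => ∀ j ∈ T, σ j = c j), P σ)

noncomputable def infl {N : ℕ} (P : (Fin N → Bool) → ℝ) (S S' : Finset (Fin N)) : ℝ :=
  ⨆ a : Fin N → Bool, ⨆ b : Fin N → Bool, ⨆ A : Finset (Fin N),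
    ⨆ _ : A ⊆ ((Finset.univ \ S) \ S'), ⨆ ω : Fin N → Bool,
      tvFin (condLawSet P (S ∪ A) (mergeConf S a ω) S')
            (condLawSet P (S ∪ A) (mergeConf S b ω) S')

section Aux

variable {N : ℕ} (P : (Fin N → Bool) → ℝ)

/-- numerator -/
noncomputable def numr (T : Finset (Fin N)) (c : Fin N → Bool) (S' : Finset (Fin N))
    (y : {i // i ∈ S'} → Bool) : ℝ :=
  ∑ σ ∈ Finset.univ.filter
      (fun σ : Fin N → Bool => (∀ j ∈ T, σ j = c j) ∧ ∀ i : {i // i ∈ S'}, σ i.val = y i), P σ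

noncomputable def denr (T : Finset (Fin N)) (c : Fin N → Bool) : ℝ :=
  ∑ σ ∈ Finset.univ.filter (fun σ : Fin N → Bool => ∀ j ∈ T, σ j = c j), P σ

lemma condLawSet_eq (T : Finset (Fin N)) (c : Fin N → Bool) (S' : Finset (Fin N))
    (y : {i // i ∈ S'} → Bool) : condLawSet P T c S' y = numr P T c S' y / denr P T c := rfl

variable (hP0 : ∀ σ, 0 ≤ P σ)
include hP0

lemma numr_nonneg (T c S') (y : {i // i ∈ S'} → Bool) : 0 ≤ numr P T c S' y :=
  Finset.sum_nonneg fun σ _ => hP0 σ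

lemma denr_nonneg (T c) : 0 ≤ denr P T c := Finset.sum_nonneg fun σ _ => hP0 σ

lemma sum_numr (T c S') : ∑ y : {i // i ∈ S'} → Bool, numr P T c S' y = denr P T c := by
  classical
  unfold numr denr
  rw [← Finset.sum_fiberwise (Finset.univ.filter (fun σ : Fin N → Bool => ∀ j ∈ T, σ j = c j))
      (fun σ (i : {i // i ∈ S'}) => σ i.val) P]
  refine Finset.sum_congr rfl fun y _ => ?_
  refine Finset.sum_congr ?_ (fun _ _ => rfl)
  rw [Finset.filter_filter]
  refine Finset.filter_congr fun σ _ => ?_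
  simp [funext_iff]

lemma condLawSet_nonneg (T c S') (y : {i // i ∈ S'} → Bool) : 0 ≤ condLawSet P T c S' y :=
  div_nonneg (numr_nonneg P hP0 T c S' y) (denr_nonneg P hP0 T c)

lemma sum_condLawSet_le_one (T c S') : ∑ y : {i // i ∈ S'} → Bool, condLawSet P T c S' y ≤ 1 := by
  simp only [condLawSet_eq, ← Finset.sum_div, sum_numr P hP0]
  rcases eq_or_lt_of_le (denr_nonneg P hP0 T c) with h | h
  · rw [← h]; simp
  · rw [div_self h.ne']

omit hP0
lemma tvFin_le_one {α : Type*} [Fintype α] {f g : α → ℝ} (hf0 : ∀ y, 0 ≤ f y) (hg0 : ∀ y, 0 ≤ g y)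
    (hf1 : ∑ y, f y ≤ 1) (hg1 : ∑ y, g y ≤ 1) : tvFin f g ≤ 1 := by
  rw [tvFin, div_le_iff₀ (by norm_num : (0:ℝ) < 2)]
  calc ∑ y, |f y - g y| ≤ ∑ y, (f y + g y) := by
        refine Finset.sum_le_sum fun y _ => ?_
        rw [abs_sub_le_iff]
        constructor <;> linarith [hf0 y, hg0 y]
    _ ≤ 1 * 2 := by rw [Finset.sum_add_distrib]; linarith

include hP0
lemma le_infl (S S' : Finset (Fin N)) (a b : Fin N → Bool) (A : Finset (Fin N))
    (hA : A ⊆ ((Finset.univ \ S) \ S')) (ω : Fin N → Bool) :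
    tvFin (condLawSet P (S ∪ A) (mergeConf S a ω) S')
          (condLawSet P (S ∪ A) (mergeConf S b ω) S') ≤ infl P S S' := by
  classical
  set F : (Fin N → Bool) → (Fin N → Bool) → Finset (Fin N) → (Fin N → Bool) → ℝ :=
    fun a b A ω => tvFin (condLawSet P (S ∪ A) (mergeConf S a ω) S')
      (condLawSet P (S ∪ A) (mergeConf S b ω) S') with hF
  have h1 : ∀ a b A ω, F a b A ω ≤ 1 := fun a b A ω =>
    tvFin_le_one (condLawSet_nonneg P hP0 _ _ _) (condLawSet_nonneg P hP0 _ _ _)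
      (sum_condLawSet_le_one P hP0 _ _ _) (sum_condLawSet_le_one P hP0 _ _ _)
  have s5 : F a b A ω ≤ ⨆ ω', F a b A ω' :=
    le_ciSup ⟨1, by rintro _ ⟨ω', rfl⟩; exact h1 a b A ω'⟩ ω
  have s4 : (⨆ ω', F a b A ω') = ⨆ _ : A ⊆ ((Finset.univ \ S) \ S'), ⨆ ω', F a b A ω' :=
    (ciSup_pos (f := fun _ => ⨆ ω', F a b A ω') hA).symm
  have s3 : (⨆ _ : A ⊆ ((Finset.univ \ S) \ S'), ⨆ ω', F a b A ω')
      ≤ ⨆ A', ⨆ _ : A' ⊆ ((Finset.univ \ S) \ S'), ⨆ ω', F a b A' ω' :=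
    le_ciSup (f := fun A' => ⨆ _ : A' ⊆ ((Finset.univ \ S) \ S'), ⨆ ω', F a b A' ω') ⟨1, by
      rintro _ ⟨A', rfl⟩
      exact Real.iSup_le (fun _ => Real.iSup_le (fun ω' => h1 a b A' ω') zero_le_one) zero_le_one⟩ A
  have s2 : (⨆ A', ⨆ _ : A' ⊆ ((Finset.univ \ S) \ S'), ⨆ ω', F a b A' ω')
      ≤ ⨆ b', ⨆ A', ⨆ _ : A' ⊆ ((Finset.univ \ S) \ S'), ⨆ ω', F a b' A' ω' :=
    le_ciSup (f := fun b' => ⨆ A', ⨆ _ : A' ⊆ ((Finset.univ \ S) \ S'), ⨆ ω', F a b' A' ω') ⟨1, by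
      rintro _ ⟨b', rfl⟩
      exact Real.iSup_le (fun A' => Real.iSup_le (fun _ => Real.iSup_le
        (fun ω' => h1 a b' A' ω') zero_le_one) zero_le_one) zero_le_one⟩ b
  have s1 : (⨆ b', ⨆ A', ⨆ _ : A' ⊆ ((Finset.univ \ S) \ S'), ⨆ ω', F a b' A' ω')
      ≤ ⨆ a', ⨆ b', ⨆ A', ⨆ _ : A' ⊆ ((Finset.univ \ S) \ S'), ⨆ ω', F a' b' A' ω' :=
    le_ciSup (f := fun a' => ⨆ b', ⨆ A', ⨆ _ : A' ⊆ ((Finset.univ \ S) \ S'), ⨆ ω', F a' b' A' ω') ⟨1, by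
      rintro _ ⟨a', rfl⟩
      exact Real.iSup_le (fun b' => Real.iSup_le (fun A' => Real.iSup_le (fun _ => Real.iSup_le
        (fun ω' => h1 a' b' A' ω') zero_le_one) zero_le_one) zero_le_one) zero_le_one⟩ a
  exact le_trans (le_trans (le_trans (s5.trans_eq s4) s3) s2) s1

lemma infl_nonneg (S S' : Finset (Fin N)) : 0 ≤ infl P S S' := by
  have := le_infl P hP0 S S' (fun _ => true) (fun _ => true) ∅ (by simp) (fun _ => true)
  have h0 : tvFin (condLawSet P (S ∪ ∅) (mergeConf S (fun _ => true) (fun _ => true)) S')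
      (condLawSet P (S ∪ ∅) (mergeConf S (fun _ => true) (fun _ => true)) S') = 0 := by
    simp [tvFin]
  linarith

omit hP0

/-- condLawSet only depends on c restricted to T -/
lemma condLawSet_congr {T : Finset (Fin N)} {c c' : Fin N → Bool} (h : ∀ j ∈ T, c j = c' j)
    (S' : Finset (Fin N)) : condLawSet P T c S' = condLawSet P T c' S' := by
  funext y
  have : ∀ σ : Fin N → Bool, (∀ j ∈ T, σ j = c j) ↔ (∀ j ∈ T, σ j = c' j) := by
    intro σ
    constructor <;> intro hh j hj <;> rw [hh j hj]
    exacts [h j hj, (h j hj).symm]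
  unfold condLawSet
  congr 1
  · apply Finset.sum_congr _ (fun _ _ => rfl)
    apply Finset.filter_congr; intro σ _; rw [this σ]
  · apply Finset.sum_congr _ (fun _ _ => rfl)
    apply Finset.filter_congr; intro σ _; simp only [this σ]

/-- abstract hybrid TV bound -/
lemma tv_hybrid {α β : Type*} [Fintype α] [Fintype β]
    (f₁ g₁ : α → ℝ) (f₂ g₂ : α → β → ℝ) (K : ℝ)
    (hf₂0 : ∀ x y, 0 ≤ f₂ x y) (hg₁0 : ∀ x, 0 ≤ g₁ x)
    (hf₂1 : ∀ x, ∑ y, f₂ x y ≤ 1) (hg₁1 : ∑ x, g₁ x ≤ 1)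
    (hK : ∀ x, tvFin (f₂ x) (g₂ x) ≤ K) (hK0 : 0 ≤ K) :
    (∑ x, ∑ y, |f₁ x * f₂ x y - g₁ x * g₂ x y|) / 2 ≤ tvFin f₁ g₁ + K := by
  have key : ∀ x y, |f₁ x * f₂ x y - g₁ x * g₂ x y|
      ≤ |f₁ x - g₁ x| * f₂ x y + g₁ x * |f₂ x y - g₂ x y| := by
    intro x y
    have h : f₁ x * f₂ x y - g₁ x * g₂ x y
        = (f₁ x - g₁ x) * f₂ x y + g₁ x * (f₂ x y - g₂ x y) := by ring
    rw [h]
    refine (abs_add_le _ _).trans ?_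
    rw [abs_mul, abs_mul, abs_of_nonneg (hf₂0 x y), abs_of_nonneg (hg₁0 x)]
  have step1 : ∑ x, ∑ y, |f₁ x * f₂ x y - g₁ x * g₂ x y|
      ≤ ∑ x, (|f₁ x - g₁ x| * ∑ y, f₂ x y + g₁ x * ∑ y, |f₂ x y - g₂ x y|) := by
    refine Finset.sum_le_sum fun x _ => ?_
    rw [Finset.mul_sum, Finset.mul_sum, ← Finset.sum_add_distrib]
    exact Finset.sum_le_sum fun y _ => key x y
  have step2 : ∑ x, (|f₁ x - g₁ x| * ∑ y, f₂ x y + g₁ x * ∑ y, |f₂ x y - g₂ x y|)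
      ≤ ∑ x, (|f₁ x - g₁ x| + g₁ x * (2 * K)) := by
    refine Finset.sum_le_sum fun x _ => ?_
    have h2 : |f₁ x - g₁ x| * ∑ y, f₂ x y ≤ |f₁ x - g₁ x| :=
      mul_le_of_le_one_right (abs_nonneg _) (hf₂1 x)
    have h3 : ∑ y, |f₂ x y - g₂ x y| ≤ 2 * K := by
      have := hK x
      rw [tvFin, div_le_iff₀ (by norm_num : (0:ℝ) < 2)] at this
      linarith
    have h4 : g₁ x * ∑ y, |f₂ x y - g₂ x y| ≤ g₁ x * (2 * K) :=
      mul_le_mul_of_nonneg_left h3 (hg₁0 x)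
    linarith
  have step3 : ∑ x, (|f₁ x - g₁ x| + g₁ x * (2 * K))
      = (∑ x, |f₁ x - g₁ x|) + (∑ x, g₁ x) * (2 * K) := by
    rw [Finset.sum_add_distrib, Finset.sum_mul]
  have step4 : (∑ x, g₁ x) * (2 * K) ≤ 2 * K :=
    mul_le_of_le_one_left (by linarith) hg₁1
  rw [tvFin]
  have := step1.trans (step2.trans_eq step3)
  linarith

end Aux


section Core

variable {N : ℕ} (P : (Fin N → Bool) → ℝ)

/-- extend a pinning `c` by values `y₁` on `S₁'` -/
def extConf (S₁' : Finset (Fin N)) (c : Fin N → Bool) (y₁ : {i // i ∈ S₁'} → Bool) :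
    Fin N → Bool := fun j => if h : j ∈ S₁' then y₁ ⟨j, h⟩ else c j

/-- configurations on a disjoint union correspond to pairs of configurations -/
def unionEquiv (S₁' S₂' : Finset (Fin N)) (h : Disjoint S₁' S₂') :
    (({i // i ∈ S₁'} → Bool) × ({i // i ∈ S₂'} → Bool)) ≃ ({i // i ∈ S₁' ∪ S₂'} → Bool) where
  toFun p i := if h1 : i.val ∈ S₁' then p.1 ⟨i.val, h1⟩ else p.2 ⟨i.val, by
    have h2 := i.2
    rw [Finset.mem_union] at h2
    tauto⟩
  invFun y := (fun i => y ⟨i.val, Finset.mem_union_left _ i.2⟩,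
               fun i => y ⟨i.val, Finset.mem_union_right _ i.2⟩)
  left_inv p := by
    refine Prod.ext (funext fun i => ?_) (funext fun i => ?_)
    · exact dif_pos i.2
    · exact dif_neg (Finset.disjoint_right.mp h i.2)
  right_inv y := by
    funext i
    by_cases h1 : i.val ∈ S₁' <;> simp [h1]

lemma match_unionEquiv {S₁' S₂' : Finset (Fin N)} (h : Disjoint S₁' S₂')
    (y₁ : {i // i ∈ S₁'} → Bool) (y₂ : {i // i ∈ S₂'} → Bool) (σ : Fin N → Bool) :
    (∀ i : {i // i ∈ S₁' ∪ S₂'}, σ i.val = unionEquiv S₁' S₂' h (y₁, y₂) i) ↔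
      ((∀ i : {i // i ∈ S₁'}, σ i.val = y₁ i) ∧ ∀ i : {i // i ∈ S₂'}, σ i.val = y₂ i) := by
  constructor
  · intro hh
    constructor
    · intro i
      have := hh ⟨i.val, Finset.mem_union_left _ i.2⟩
      rwa [show unionEquiv S₁' S₂' h (y₁, y₂) ⟨i.val, Finset.mem_union_left _ i.2⟩ = y₁ i from
        dif_pos i.2] at this
    · intro i
      have := hh ⟨i.val, Finset.mem_union_right _ i.2⟩
      rwa [show unionEquiv S₁' S₂' h (y₁, y₂) ⟨i.val, Finset.mem_union_right _ i.2⟩ = y₂ i by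
        exact dif_neg (Finset.disjoint_right.mp h i.2)] at this
  · rintro ⟨h1, h2⟩ i
    rcases Finset.mem_union.mp i.2 with hi | hi
    · rw [show unionEquiv S₁' S₂' h (y₁, y₂) i = y₁ ⟨i.val, hi⟩ from dif_pos hi]
      exact h1 ⟨i.val, hi⟩
    · have hni : i.val ∉ S₁' := Finset.disjoint_right.mp h hi
      rw [show unionEquiv S₁' S₂' h (y₁, y₂) i = y₂ ⟨i.val, hi⟩ from dif_neg hni]
      exact h2 ⟨i.val, hi⟩

lemma agr_ext {T S₁' : Finset (Fin N)} (hd : Disjoint S₁' T) (c : Fin N → Bool)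
    (y₁ : {i // i ∈ S₁'} → Bool) (σ : Fin N → Bool) :
    (∀ j ∈ T ∪ S₁', σ j = extConf S₁' c y₁ j) ↔
      ((∀ j ∈ T, σ j = c j) ∧ ∀ i : {i // i ∈ S₁'}, σ i.val = y₁ i) := by
  constructor
  · intro hh
    constructor
    · intro j hj
      have := hh j (Finset.mem_union_left _ hj)
      rwa [extConf, dif_neg (Finset.disjoint_right.mp hd hj)] at this
    · intro i
      have := hh i.val (Finset.mem_union_right _ i.2)
      rwa [extConf, dif_pos i.2] at this
  · rintro ⟨h1, h2⟩ j hj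
    rcases Finset.mem_union.mp hj with hj | hj
    · rw [extConf]
      simp only [dif_neg (Finset.disjoint_right.mp hd hj)]
      exact h1 j hj
    · rw [extConf]
      simp only [dif_pos hj]
      exact h2 ⟨j, hj⟩

lemma numr_union_eq {T S₁' S₂' : Finset (Fin N)} (h12 : Disjoint S₁' S₂')
    (hd : Disjoint S₁' T) (c : Fin N → Bool)
    (y₁ : {i // i ∈ S₁'} → Bool) (y₂ : {i // i ∈ S₂'} → Bool) :
    numr P T c (S₁' ∪ S₂') (unionEquiv S₁' S₂' h12 (y₁, y₂)) =
      numr P (T ∪ S₁') (extConf S₁' c y₁) S₂' y₂ := by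
  unfold numr
  refine Finset.sum_congr ?_ (fun _ _ => rfl)
  refine Finset.filter_congr fun σ _ => ?_
  rw [match_unionEquiv h12, agr_ext hd]
  tauto

lemma numr_eq_denr_ext {T S₁' : Finset (Fin N)} (hd : Disjoint S₁' T) (c : Fin N → Bool)
    (y₁ : {i // i ∈ S₁'} → Bool) :
    numr P T c S₁' y₁ = denr P (T ∪ S₁') (extConf S₁' c y₁) := by
  unfold numr denr
  refine Finset.sum_congr ?_ (fun _ _ => rfl)
  refine Finset.filter_congr fun σ _ => ?_
  rw [agr_ext hd]

variable (hP0 : ∀ σ, 0 ≤ P σ)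
include hP0

lemma numr_le_denr (T c S') (y : {i // i ∈ S'} → Bool) : numr P T c S' y ≤ denr P T c := by
  refine Finset.sum_le_sum_of_subset_of_nonneg ?_ (fun σ _ _ => hP0 σ)
  intro σ hσ
  simp only [Finset.mem_filter] at hσ ⊢
  exact ⟨hσ.1, hσ.2.1⟩

lemma factorize {T S₁' S₂' : Finset (Fin N)} (h12 : Disjoint S₁' S₂')
    (hd : Disjoint S₁' T) (c : Fin N → Bool)
    (y₁ : {i // i ∈ S₁'} → Bool) (y₂ : {i // i ∈ S₂'} → Bool) :
    condLawSet P T c (S₁' ∪ S₂') (unionEquiv S₁' S₂' h12 (y₁, y₂)) =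
      condLawSet P T c S₁' y₁ * condLawSet P (T ∪ S₁') (extConf S₁' c y₁) S₂' y₂ := by
  rw [condLawSet_eq, condLawSet_eq, condLawSet_eq, numr_union_eq P h12 hd,
    numr_eq_denr_ext P hd]
  rcases eq_or_ne (denr P (T ∪ S₁') (extConf S₁' c y₁)) 0 with h | h
  · have h0 : numr P (T ∪ S₁') (extConf S₁' c y₁) S₂' y₂ = 0 :=
      le_antisymm (h ▸ numr_le_denr P hP0 _ _ _ _) (numr_nonneg P hP0 _ _ _ _)
    simp [h, h0]
  · rw [div_mul_div_comm, mul_comm (denr P T c), mul_div_mul_left _ _ h]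

end Core

/-- Subadditivity of influence in the target set: `I(S → S₁'∪S₂') ≤ I(S→S₁') + I(S→S₂')`. -/
theorem stmt8 {N : ℕ} (P : (Fin N → Bool) → ℝ)
    (hP0 : ∀ σ, 0 ≤ P σ) (hP1 : ∑ σ, P σ = 1)
    (S S₁' S₂' : Finset (Fin N))
    (h12 : Disjoint S₁' S₂') (hS : Disjoint S (S₁' ∪ S₂')) :
    infl P S (S₁' ∪ S₂') ≤ infl P S S₁' + infl P S S₂' := by
  classical
  have hS1 : Disjoint S S₁' := (Finset.disjoint_union_right.mp hS).1
  have hS2 : Disjoint S S₂' := (Finset.disjoint_union_right.mp hS).2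
  have hR : 0 ≤ infl P S S₁' + infl P S S₂' :=
    add_nonneg (infl_nonneg P hP0 S S₁') (infl_nonneg P hP0 S S₂')
  rw [infl]
  refine Real.iSup_le (fun a => Real.iSup_le (fun b => Real.iSup_le (fun A =>
    Real.iSup_le (fun hA => Real.iSup_le (fun ω => ?_) hR) hR) hR) hR) hR
  have hAS : ∀ j ∈ A, j ∉ S ∧ j ∉ S₁' ∧ j ∉ S₂' := by
    intro j hj
    have := hA hj
    simp only [Finset.mem_sdiff, Finset.mem_union] at this
    tauto
  have hA1 : A ⊆ (Finset.univ \ S) \ S₁' := by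
    intro j hj
    obtain ⟨h1, h2, h3⟩ := hAS j hj
    simp [Finset.mem_sdiff, h1, h2]
  have hd1 : Disjoint S₁' (S ∪ A) := by
    refine Finset.disjoint_union_right.mpr ⟨hS1.symm, ?_⟩
    exact Finset.disjoint_left.mpr fun j hj1 hjA => (hAS j hjA).2.1 hj1
  have hA2 : A ∪ S₁' ⊆ (Finset.univ \ S) \ S₂' := by
    intro j hj
    rcases Finset.mem_union.mp hj with hj | hj
    · obtain ⟨h1, h2, h3⟩ := hAS j hj
      simp [Finset.mem_sdiff, h1, h3]
    · have h1 : j ∉ S := Finset.disjoint_right.mp hS1 hj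
      have h3 : j ∉ S₂' := Finset.disjoint_left.mp h12 hj
      simp [Finset.mem_sdiff, h1, h3]
  set ca := mergeConf S a ω with hca
  set cb := mergeConf S b ω with hcb
  rw [tvFin]
  have hsum : ∑ y : {i // i ∈ S₁' ∪ S₂'} → Bool,
        |condLawSet P (S ∪ A) ca (S₁' ∪ S₂') y - condLawSet P (S ∪ A) cb (S₁' ∪ S₂') y|
      = ∑ p : ({i // i ∈ S₁'} → Bool) × ({i // i ∈ S₂'} → Bool),
        |condLawSet P (S ∪ A) ca (S₁' ∪ S₂') (unionEquiv S₁' S₂' h12 p)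
          - condLawSet P (S ∪ A) cb (S₁' ∪ S₂') (unionEquiv S₁' S₂' h12 p)| :=
    (Equiv.sum_comp (unionEquiv S₁' S₂' h12) _).symm
  rw [hsum, Fintype.sum_prod_type]
  have heq : (∑ y₁ : {i // i ∈ S₁'} → Bool, ∑ y₂ : {i // i ∈ S₂'} → Bool,
        |condLawSet P (S ∪ A) ca (S₁' ∪ S₂') (unionEquiv S₁' S₂' h12 (y₁, y₂))
          - condLawSet P (S ∪ A) cb (S₁' ∪ S₂') (unionEquiv S₁' S₂' h12 (y₁, y₂))|)
      = ∑ y₁ : {i // i ∈ S₁'} → Bool, ∑ y₂ : {i // i ∈ S₂'} → Bool,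
        |condLawSet P (S ∪ A) ca S₁' y₁
            * condLawSet P ((S ∪ A) ∪ S₁') (extConf S₁' ca y₁) S₂' y₂
          - condLawSet P (S ∪ A) cb S₁' y₁
            * condLawSet P ((S ∪ A) ∪ S₁') (extConf S₁' cb y₁) S₂' y₂| := by
    refine Finset.sum_congr rfl fun y₁ _ => Finset.sum_congr rfl fun y₂ _ => ?_
    rw [factorize P hP0 h12 hd1 ca, factorize P hP0 h12 hd1 cb]
  rw [heq]
  have hK : ∀ y₁ : {i // i ∈ S₁'} → Bool,
      tvFin (condLawSet P ((S ∪ A) ∪ S₁') (extConf S₁' ca y₁) S₂')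
            (condLawSet P ((S ∪ A) ∪ S₁') (extConf S₁' cb y₁) S₂') ≤ infl P S S₂' := by
    intro y₁
    set ω' : Fin N → Bool := fun j => if h : j ∈ S₁' then y₁ ⟨j, h⟩ else ω j with hω'
    have hU : (S ∪ A) ∪ S₁' = S ∪ (A ∪ S₁') := Finset.union_assoc S A S₁'
    have hag : ∀ v : Fin N → Bool, ∀ j ∈ S ∪ (A ∪ S₁'),
        extConf S₁' (mergeConf S v ω) y₁ j = mergeConf S v ω' j := by
      intro v j hj
      rcases Finset.mem_union.mp hj with hj | hj
      · have h1 : j ∉ S₁' := Finset.disjoint_left.mp hS1 hj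
        simp [extConf, mergeConf, h1, hj]
      · rcases Finset.mem_union.mp hj with hj | hj
        · obtain ⟨h1, h2, h3⟩ := hAS j hj
          simp [extConf, mergeConf, hω', h1, h2]
        · have h1 : j ∉ S := Finset.disjoint_right.mp hS1 hj
          simp [extConf, mergeConf, hω', h1, hj]
    have e1 : condLawSet P (S ∪ (A ∪ S₁')) (extConf S₁' ca y₁) S₂'
        = condLawSet P (S ∪ (A ∪ S₁')) (mergeConf S a ω') S₂' :=
      condLawSet_congr P (hag a) S₂'
    have e2 : condLawSet P (S ∪ (A ∪ S₁')) (extConf S₁' cb y₁) S₂'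
        = condLawSet P (S ∪ (A ∪ S₁')) (mergeConf S b ω') S₂' :=
      condLawSet_congr P (hag b) S₂'
    rw [hU, e1, e2]
    exact le_infl P hP0 S S₂' a b (A ∪ S₁') hA2 ω'
  calc (∑ y₁ : {i // i ∈ S₁'} → Bool, ∑ y₂ : {i // i ∈ S₂'} → Bool,
        |condLawSet P (S ∪ A) ca S₁' y₁
            * condLawSet P ((S ∪ A) ∪ S₁') (extConf S₁' ca y₁) S₂' y₂
          - condLawSet P (S ∪ A) cb S₁' y₁
            * condLawSet P ((S ∪ A) ∪ S₁') (extConf S₁' cb y₁) S₂' y₂|) / 2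
      ≤ tvFin (condLawSet P (S ∪ A) ca S₁') (condLawSet P (S ∪ A) cb S₁') + infl P S S₂' := by
        refine tv_hybrid _ _ _ _ _ (fun y₁ y₂ => condLawSet_nonneg P hP0 _ _ _ _)
          (fun y₁ => condLawSet_nonneg P hP0 _ _ _ _)
          (fun y₁ => sum_condLawSet_le_one P hP0 _ _ _)
          (sum_condLawSet_le_one P hP0 _ _ _) hK (infl_nonneg P hP0 S S₂')
    _ ≤ infl P S S₁' + infl P S S₂' :=
        add_le_add_left (le_infl P hP0 S S₁' a b A hA1 ω) _
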